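/- The horocyclic deformations along a fixed measured foliation form a flow: for all τ ∈ ℍ, real s, t, and (a,b) ∈ ℝ² \ {0}, E_{sλ_{[a,b]}}(E_{tλ_{[a,b]}}(τ)) = E_{(s+t)λ_{[a,b]}}(τ), where E_{tλ_{[a,b]}}(τ) = ((1 − tab/ℓ(τ))τ − ta²/ℓ(τ))/((tb²/ℓ(τ))τ + 1 + tab/ℓ(τ)) and ℓ(τ) = |a+bτ|/√(Im τ). -/

import Mathlib

/-- The flat length `ℓ_{[a,b]}(τ) = |a + bτ|/√(Im τ)`. -/
noncomputable def torusLength (a b : ℝ) (τ : ℂ) : ℝ :=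
  ‖(a : ℂ) + (b : ℂ) * τ‖ / Real.sqrt τ.im

/-- The horocyclic deformation at time `t` along `λ_{[a,b]}`. -/
noncomputable def horocyclicDeformation (a b t : ℝ) (τ : ℂ) : ℂ :=
  ((1 - (t : ℂ) * a * b / (torusLength a b τ : ℝ)) * τ
      - (t : ℂ) * (a : ℂ)^2 / (torusLength a b τ : ℝ))
    / (((t : ℂ) * (b : ℂ)^2 / (torusLength a b τ : ℝ)) * τ
      + 1 + (t : ℂ) * a * b / (torusLength a b τ : ℝ))

/-- Auxiliary Möbius transformation with real coefficients. -/
noncomputable def moeb (α β γ δ : ℝ) (τ : ℂ) : ℂ :=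
  ((α : ℂ) * τ + β) / ((γ : ℂ) * τ + δ)

lemma den_ne_zero {α β γ δ : ℝ} (h : α * δ - β * γ = 1) {τ : ℂ} (hτ : 0 < τ.im) :
    ((γ : ℂ) * τ + (δ : ℂ)) ≠ 0 := by
  intro h0
  have him : γ * τ.im = 0 := by
    have := congrArg Complex.im h0; simpa using this
  have hγ : γ = 0 := by
    rcases mul_eq_zero.1 him with h' | h'
    · exact h'
    · exact absurd h' hτ.ne'
  have hre : γ * τ.re + δ = 0 := by
    have := congrArg Complex.re h0; simpa using this
  rw [hγ] at hre
  simp at hre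
  rw [hγ, hre] at h
  simp at h

lemma moeb_im (α β γ δ : ℝ) (h : α * δ - β * γ = 1) (τ : ℂ) :
    (moeb α β γ δ τ).im = τ.im / Complex.normSq ((γ : ℂ) * τ + δ) := by
  rw [moeb, Complex.div_im, ← sub_div]
  congr 1
  simp only [Complex.add_im, Complex.add_re, Complex.ofReal_im, Complex.ofReal_re,
    Complex.mul_im, Complex.mul_re,]
  linear_combination τ.im * h

lemma len_pos (a b : ℝ) (hab : (a, b) ≠ (0, 0)) {τ : ℂ} (hτ : 0 < τ.im) :
    0 < torusLength a b τ := by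
  have h0 : (a : ℂ) + (b : ℂ) * τ ≠ 0 := by
    intro h
    rcases eq_or_ne b 0 with hb | hb
    · simp [hb] at h
      exact hab (by simp [h, hb])
    · have := congrArg Complex.im h
      simp at this
      rcases this with h' | h'
      · exact hb h'
      · exact hτ.ne' h'
  exact div_pos (norm_pos_iff.2 h0) (Real.sqrt_pos.2 hτ)

lemma len_moeb (a b : ℝ) {α β γ δ : ℝ} (hdet : α * δ - β * γ = 1)
    (hγ : a * γ + b * α = b) (hδ : a * δ + b * β = a) {τ : ℂ} (hτ : 0 < τ.im) :
    torusLength a b (moeb α β γ δ τ) = torusLength a b τ := by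
  set D : ℂ := (γ : ℂ) * τ + δ with hDdef
  have hD : D ≠ 0 := den_ne_zero hdet hτ
  have c1 : (a : ℂ) * γ + (b : ℂ) * α = b := by exact_mod_cast congrArg (Complex.ofReal) hγ
  have c2 : (a : ℂ) * δ + (b : ℂ) * β = a := by exact_mod_cast congrArg (Complex.ofReal) hδ
  have h1 : (a : ℂ) + (b : ℂ) * moeb α β γ δ τ = ((a : ℂ) + b * τ) / D := by
    rw [moeb, eq_div_iff hD, hDdef]
    rw [add_mul, mul_assoc, div_mul_cancel₀ _ (show (γ : ℂ) * τ + δ ≠ 0 from hD)]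
    linear_combination τ * c1 + c2
  have h3 : (moeb α β γ δ τ).im = τ.im / Complex.normSq D := moeb_im α β γ δ hdet τ
  rw [torusLength, torusLength, h1, h3, norm_div]
  have hD2 : 0 < Complex.normSq D := Complex.normSq_pos.2 hD
  rw [Real.sqrt_div hτ.le, show Real.sqrt (Complex.normSq D) = ‖D‖ from by
    rw [Complex.norm_def]]
  have hs : Real.sqrt τ.im ≠ 0 := (Real.sqrt_pos.2 hτ).ne'
  have ha : ‖D‖ ≠ 0 := (norm_pos_iff.2 hD).ne'
  field_simp

lemma hdef_eq (a b t : ℝ) (τ : ℂ) :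
    horocyclicDeformation a b t τ
      = moeb (1 - (t / torusLength a b τ) * a * b) (-((t / torusLength a b τ) * a ^ 2))
          ((t / torusLength a b τ) * b ^ 2) (1 + (t / torusLength a b τ) * a * b) τ := by
  rw [horocyclicDeformation, moeb]
  push_cast
  congr 1 <;> ring

lemma moeb_comp (a b x y : ℝ) (τ : ℂ) (hτ : 0 < τ.im) :
    moeb (1 - y * a * b) (-(y * a ^ 2)) (y * b ^ 2) (1 + y * a * b)
        (moeb (1 - x * a * b) (-(x * a ^ 2)) (x * b ^ 2) (1 + x * a * b) τ)
      = moeb (1 - (x + y) * a * b) (-((x + y) * a ^ 2)) ((x + y) * b ^ 2)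
          (1 + (x + y) * a * b) τ := by
  have det_x : (1 - x * a * b) * (1 + x * a * b) - -(x * a ^ 2) * (x * b ^ 2) = 1 := by ring
  have hD1 : ((x * b ^ 2 : ℝ) : ℂ) * τ + ((1 + x * a * b : ℝ) : ℂ) ≠ 0 :=
    den_ne_zero det_x hτ
  simp only [moeb]
  set N1 : ℂ := ((1 - x * a * b : ℝ) : ℂ) * τ + ((-(x * a ^ 2) : ℝ) : ℂ) with hN1
  set D1 : ℂ := ((x * b ^ 2 : ℝ) : ℂ) * τ + ((1 + x * a * b : ℝ) : ℂ) with hD1d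
  have e1 : ((1 - y * a * b : ℝ) : ℂ) * (N1 / D1) + ((-(y * a ^ 2) : ℝ) : ℂ)
      = (((1 - y * a * b : ℝ) : ℂ) * N1 + ((-(y * a ^ 2) : ℝ) : ℂ) * D1) / D1 := by
    field_simp
  have e2 : ((y * b ^ 2 : ℝ) : ℂ) * (N1 / D1) + ((1 + y * a * b : ℝ) : ℂ)
      = (((y * b ^ 2 : ℝ) : ℂ) * N1 + ((1 + y * a * b : ℝ) : ℂ) * D1) / D1 := by
    field_simp
  rw [e1, e2, div_div_div_comm, div_self hD1, div_one]
  congr 1 <;> (rw [hN1, hD1d]; push_cast; ring)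

theorem horocyclic_deformation_flow (τ : ℂ) (hτ : 0 < τ.im)
    (a b : ℝ) (hab : (a, b) ≠ (0, 0)) (s t : ℝ) :
    horocyclicDeformation a b s (horocyclicDeformation a b t τ)
      = horocyclicDeformation a b (s + t) τ := by
  have hℓ : 0 < torusLength a b τ := len_pos a b hab hτ
  have hlen : torusLength a b (moeb (1 - (t / torusLength a b τ) * a * b)
      (-((t / torusLength a b τ) * a ^ 2)) ((t / torusLength a b τ) * b ^ 2)
      (1 + (t / torusLength a b τ) * a * b) τ) = torusLength a b τ :=
    len_moeb a b (by ring) (by ring) (by ring) hτ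
  rw [hdef_eq a b t τ, hdef_eq a b s _, hlen, hdef_eq a b (s + t) τ,
    show (s + t) / torusLength a b τ
      = t / torusLength a b τ + s / torusLength a b τ from by ring]
  exact moeb_comp a b (t / torusLength a b τ) (s / torusLength a b τ) τ hτ
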